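/- For t ∈ (0,π), θ(t) > ψ(t), where θ(t) is the interior angle at E(t) and ψ(t) the interior angle at 0 made by the chord [0, E(t)] with the curve E_{[0,t]}, E(t) = sin t + i·ξ(t), ξ'(t) = sin²t/√(1+sin²t). -/

import Mathlib

open Real

/-- The function ξ, antiderivative of sin²t/√(1+sin²t) vanishing at 0. -/
noncomputable def xi (t : ℝ) : ℝ := ∫ r in (0:ℝ)..t, Real.sin r ^ 2 / Real.sqrt (1 + Real.sin r ^ 2)

/-- The rectangular elastica E(t) = sin t + i ξ(t). -/
noncomputable def E (t : ℝ) : ℂ := Real.sin t + xi t * Complex.I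

/-- ψ(t): the interior angle at 0 made by the chord [0, E(t)] with the curve E_{[0,t]}. -/
noncomputable def psi (t : ℝ) : ℝ := Complex.arg (E t)

/-- The direction angle of the tangent of E at parameter t (the turning angle of E on [0,t]). -/
noncomputable def tangentAngle (t : ℝ) : ℝ := 2 * arccos (Real.cos t / Real.sqrt 2) - π / 2

/-- θ(t): the interior angle at E(t) made by the chord [0, E(t)] with the curve E_{[0,t]}. -/
noncomputable def theta (t : ℝ) : ℝ := tangentAngle t - psi t

noncomputable def uu (x : ℝ) : ℝ := Real.sqrt (1 + Real.sin x ^ 2)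

noncomputable def hh (x : ℝ) : ℝ :=
  Real.sin x * (uu x - Real.cos x) / (uu x + Real.cos x) - xi x

lemma uu_one_le (x : ℝ) : 1 ≤ uu x := by
  rw [uu, show (1:ℝ) = Real.sqrt 1 from (Real.sqrt_one).symm]
  exact Real.sqrt_le_sqrt (by nlinarith [sq_nonneg (Real.sin x), Real.sqrt_one])

lemma uu_sq (x : ℝ) : uu x ^ 2 = 1 + Real.sin x ^ 2 :=
  Real.sq_sqrt (by positivity)

lemma uu_pos (x : ℝ) : 0 < uu x := lt_of_lt_of_le one_pos (uu_one_le x)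

lemma D_pos {x : ℝ} (hx : x ∈ Set.Ico 0 π) : 0 < uu x + Real.cos x := by
  rcases eq_or_lt_of_le hx.1 with h | h
  · simp [← h, uu]
  · have hs : 0 < Real.sin x := Real.sin_pos_of_pos_of_lt_pi h hx.2
    nlinarith [uu_sq x, uu_pos x, Real.sin_sq_add_cos_sq x, abs_le_abs (le_refl (1:ℝ))]

lemma cont_f : Continuous (fun r => Real.sin r ^ 2 / Real.sqrt (1 + Real.sin r ^ 2)) := by
  apply Continuous.div (by continuity) (by continuity)
  intro r
  exact ne_of_gt (Real.sqrt_pos.mpr (by positivity))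

lemma xi_hasDerivAt (x : ℝ) :
    HasDerivAt xi (Real.sin x ^ 2 / Real.sqrt (1 + Real.sin x ^ 2)) x := by
  unfold xi
  exact intervalIntegral.integral_hasDerivAt_right (cont_f.intervalIntegrable _ _)
    (cont_f.stronglyMeasurableAtFilter _ _) cont_f.continuousAt

lemma uu_hasDerivAt (x : ℝ) :
    HasDerivAt uu (Real.sin x * Real.cos x / uu x) x := by
  have h1 : HasDerivAt (fun y => 1 + Real.sin y ^ 2) (2 * Real.sin x * Real.cos x) x := by
    have := ((Real.hasDerivAt_sin x).pow 2).const_add 1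
    refine this.congr_deriv (Eq.symm ?_)
    ring
  have := h1.sqrt (by positivity)
  refine this.congr_deriv (Eq.symm ?_)
  rw [uu]
  field_simp

lemma hh_hasDerivAt {x : ℝ} (hx : x ∈ Set.Ico 0 π) :
    HasDerivAt hh (2 * Real.sin x ^ 2 / (uu x * (uu x + Real.cos x) ^ 2)) x := by
  have hD : 0 < uu x + Real.cos x := D_pos hx
  have hu : 0 < uu x := uu_pos x
  have hN : HasDerivAt (fun y => Real.sin y * (uu y - Real.cos y))
      (Real.cos x * (uu x - Real.cos x) +
        Real.sin x * (Real.sin x * Real.cos x / uu x + Real.sin x)) x :=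
    (Real.hasDerivAt_sin x).mul ((uu_hasDerivAt x).sub (Real.hasDerivAt_cos x) |>.congr_deriv (by ring))
  have hDen : HasDerivAt (fun y => uu y + Real.cos y)
      (Real.sin x * Real.cos x / uu x + -Real.sin x) x :=
    (uu_hasDerivAt x).add (Real.hasDerivAt_cos x)
  have hg := hN.div hDen (ne_of_gt hD)
  have := hg.sub (xi_hasDerivAt x)
  refine this.congr_deriv (Eq.symm ?_)
  rw [show Real.sqrt (1 + Real.sin x ^ 2) = uu x from rfl]
  have hu2 : uu x ^ 2 = 1 + Real.sin x ^ 2 := uu_sq x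
  have hc2 : Real.sin x ^ 2 + Real.cos x ^ 2 = 1 := Real.sin_sq_add_cos_sq x
  field_simp
  linear_combination ((-2)*Real.sin x^2*Real.cos x^1*uu x^1 + (-1)*Real.sin x^2*Real.cos x^4 + (-2)*Real.sin x^2 + (-1)*Real.sin x^2*uu x^2 + (1)*Real.sin x^2*uu x^4 + (1)*Real.cos x^1*uu x^5 + (2)*Real.cos x^2*uu x^4 + (-2)*Real.cos x^4*uu x^2 + (-1)*Real.cos x^5*uu x^1 + (1)*Real.sin x^4*uu x^2 + (1)*Real.cos x^1*uu x^3 + (1)*Real.sin x^2*Real.cos x^1*uu x^3 + (2)*Real.cos x^2*uu x^2 + (-2)*Real.cos x^4 + (1)*Real.sin x^6 + (1)*Real.sin x^4*Real.cos x^1*uu x^1 + (2)*Real.cos x^2 + (2)*Real.sin x^2*Real.cos x^1*uu x^1 + (1)*Real.sin x^2*Real.cos x^4 + (1)*Real.sin x^2*uu x^2 + (-1)*Real.sin x^2*uu x^4 + (-1)*Real.cos x^1*uu x^5 + (-2)*Real.cos x^2*uu x^4 + (2)*Real.cos x^4*uu x^2 + (1)*Real.cos x^5*uu x^1 + (1)*Real.sin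 x^2 + (-1)*Real.sin x^4*uu x^2 + (-1)*Real.cos x^1*uu x^3 + (-1)*Real.sin x^2*Real.cos x^1*uu x^3 + (-2)*Real.cos x^2*uu x^2 + (2)*Real.cos x^4 + (-1)*Real.sin x^6 + (-1)*Real.cos x^1*uu x^1 + (-1)*Real.sin x^4*Real.cos x^1*uu x^1 + (-2)*Real.cos x^2) * hu2 + ((2)*Real.sin x^4 + (-3)*Real.sin x^2*Real.cos x^2 + (-1)*Real.sin x^4*Real.cos x^2 + (-1)*Real.cos x^3*uu x^1 + (-1)*Real.sin x^2*Real.cos x^3*uu x^1 + (1)*Real.sin x^6 + (-2)*Real.cos x^2 + (1)*Real.sin x^4*Real.cos x^1*uu x^1 + (-1)*Real.sin x^2 + (-2)*Real.sin x^4 + (3)*Real.sin x^2*Real.cos x^2 + (1)*Real.sin x^4*Real.cos x^2 + (1)*Real.cos x^3*uu x^1 + (1)*Real.sin x^2*Real.cos x^3*uu x^1 + (-1)*Real.sin x^6 + (2)*Real.cos x^2 + (1)*Real.cos x^1*uu x^1 + (-1)*Real.sin x^4*Real.cos x^1*uu x^1) * hc2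

lemma hh_zero : hh 0 = 0 := by
  simp [hh, xi]

lemma hh_pos {t : ℝ} (ht : t ∈ Set.Ioo 0 π) : 0 < hh t := by
  have hmono : StrictMonoOn hh (Set.Icc 0 t) := by
    apply strictMonoOn_of_deriv_pos (convex_Icc 0 t)
    · intro x hx
      exact (hh_hasDerivAt ⟨hx.1, lt_of_le_of_lt hx.2 ht.2⟩).continuousAt.continuousWithinAt
    · intro x hx
      rw [interior_Icc] at hx
      have hxπ : x < π := lt_trans hx.2 ht.2
      have hx' : x ∈ Set.Ico 0 π := ⟨hx.1.le, hxπ⟩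
      rw [(hh_hasDerivAt hx').deriv]
      have hs : 0 < Real.sin x := Real.sin_pos_of_pos_of_lt_pi hx.1 hxπ
      exact div_pos (by nlinarith) (mul_pos (uu_pos x) (pow_pos (D_pos hx') 2))
  have := hmono (Set.left_mem_Icc.mpr ht.1.le) (Set.right_mem_Icc.mpr ht.1.le) ht.1
  rwa [hh_zero] at this

theorem stmt_19 (t : ℝ) (ht : t ∈ Set.Ioo 0 π) : theta t > psi t := by
  obtain ⟨ht0, htπ⟩ := ht
  have hs : 0 < Real.sin t := Real.sin_pos_of_pos_of_lt_pi ht0 htπ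
  have hD : 0 < uu t + Real.cos t := D_pos ⟨ht0.le, htπ⟩
  have hu2 : uu t ^ 2 = 1 + Real.sin t ^ 2 := uu_sq t
  have hc2 : Real.sin t ^ 2 + Real.cos t ^ 2 = 1 := Real.sin_sq_add_cos_sq t
  have hupos : 0 < uu t := uu_pos t
  set r := (uu t - Real.cos t) / (uu t + Real.cos t) with hr
  have hrnn : 0 ≤ r := div_nonneg (by nlinarith [Real.cos_le_one t, uu_one_le t]) hD.le
  have hsq : Real.sqrt (1 + r ^ 2) = 2 / (uu t + Real.cos t) := by
    rw [show 1 + r ^ 2 = (2 / (uu t + Real.cos t)) ^ 2 by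
      rw [hr]; field_simp; linear_combination (2:ℝ) * hu2 + 2 * hc2]
    exact Real.sqrt_sq (by positivity)
  have hs2 : Real.sqrt 2 ≠ 0 := by positivity
  have hs2sq : Real.sqrt 2 ^ 2 = 2 := Real.sq_sqrt (by norm_num)
  have hcos : Real.cos (Real.arctan r + π / 4) = Real.cos t / Real.sqrt 2 := by
    rw [Real.cos_add, Real.cos_arctan, Real.sin_arctan, Real.cos_pi_div_four,
      Real.sin_pi_div_four, hsq, hr]
    field_simp
    linear_combination (2 * Real.cos t) * hs2sq
  have harc : Real.arccos (Real.cos t / Real.sqrt 2) = Real.arctan r + π / 4 := by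
    rw [← hcos, Real.arccos_cos]
    · have h0 : (0:ℝ) ≤ Real.arctan r := by
        rw [← Real.arctan_zero]
        exact Real.arctan_strictMono.monotone hrnn
      have := Real.pi_pos
      linarith
    · have := Real.arctan_lt_pi_div_two r
      have := Real.pi_pos
      linarith
  have hre : (E t).re = Real.sin t := by simp [E, -Complex.ofReal_sin]
  have him : (E t).im = xi t := by simp [E, -Complex.ofReal_sin]
  have hpsi : psi t = Real.arctan (xi t / Real.sin t) := by
    have habs : |Complex.arg (E t)| < π / 2 :=
      Complex.abs_arg_lt_pi_div_two_iff.mpr (Or.inl (by rw [hre]; exact hs))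
    obtain ⟨h1, h2⟩ := abs_lt.mp habs
    calc psi t = Real.arctan (Real.tan (Complex.arg (E t))) :=
          (Real.arctan_tan h1 h2).symm
      _ = Real.arctan ((E t).im / (E t).re) := by rw [Complex.tan_arg]
      _ = Real.arctan (xi t / Real.sin t) := by rw [hre, him]
  have hlt : xi t / Real.sin t < r := by
    have h := hh_pos ⟨ht0, htπ⟩
    rw [hh] at h
    rw [div_lt_iff₀ hs, hr]
    have heq : Real.sin t * (uu t - Real.cos t) / (uu t + Real.cos t)
        = (uu t - Real.cos t) / (uu t + Real.cos t) * Real.sin t := by ring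
    linarith [heq ▸ h]
  have htheta : theta t = 2 * Real.arctan r - psi t := by
    rw [theta, tangentAngle, harc]; ring
  have hm := Real.arctan_strictMono hlt
  rw [gt_iff_lt, htheta, hpsi]
  linarith
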